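/- arXiv:2007.11080 — 3 statements merged into one kernel-verified Lean document; each statement's English description precedes it below -/
import Mathlib

section
/- Let k ≥ 1 be an integer, let a_m > 0 with m·a_m^k → a ∈ (0,∞) as m → ∞, and for each m let G_{m,1},…,G_{m,m} be i.i.d. Gamma(k, 1/a_m) random variables. Then for each fixed t ≥ 0 and integer p ≥ 0, P(#{i ≤ m : G_{m,i} ≤ t} = p) converges as m → ∞ to (a t^k/k!)^p e^{-a t^k/k!} / p!, i.e., the counting variable converges in distribution to Poisson(a t^k / k!). -/
open MeasureTheory ProbabilityTheory Real Set Filter intervalIntegral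
open scoped ENNReal


lemma meas_count_eq {Ω : Type*} [MeasurableSpace Ω] (μ : Measure Ω) [IsProbabilityMeasure μ]
    {m : ℕ} (G : Fin m → Ω → ℝ) (hmeas : ∀ i, Measurable (G i))
    (hindep : iIndepFun G μ) (t : ℝ) (q : ℝ≥0∞)
    (hq : ∀ i, μ (G i ⁻¹' Iic t) = q) (p : ℕ) :
    μ {ω | (Finset.univ.filter (fun i : Fin m => G i ω ≤ t)).card = p}
      = (m.choose p : ℝ≥0∞) * q ^ p * (1 - q) ^ (m - p) := by
  classical
  -- the measurable building blocks
  set B : Fin m → Set Ω := fun i => G i ⁻¹' Iic t with hB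
  have hBmeas : ∀ i, MeasurableSet (B i) := fun i => (hmeas i) measurableSet_Iic
  -- decompose the event
  have hset : {ω | (Finset.univ.filter (fun i : Fin m => G i ω ≤ t)).card = p}
      = ⋃ s ∈ Finset.powersetCard p (Finset.univ : Finset (Fin m)),
          {ω | Finset.univ.filter (fun i : Fin m => G i ω ≤ t) = s} := by
    ext ω
    simp only [mem_setOf_eq, mem_iUnion, Finset.mem_powersetCard, exists_prop]
    constructor
    · intro h
      exact ⟨_, ⟨Finset.subset_univ _, h⟩, rfl⟩
    · rintro ⟨s, ⟨-, hcard⟩, hfs⟩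
      rw [hfs]; exact hcard
  -- each piece as an intersection
  have hpiece : ∀ s : Finset (Fin m),
      {ω | Finset.univ.filter (fun i : Fin m => G i ω ≤ t) = s}
        = ⋂ i, (if i ∈ s then B i else (B i)ᶜ) := by
    intro s
    ext ω
    simp only [mem_setOf_eq, Finset.ext_iff, Finset.mem_filter, Finset.mem_univ, true_and,
      mem_iInter]
    constructor
    · intro h i
      by_cases hi : i ∈ s <;> simp only [hi, if_true, if_false]
      · exact (h i).mpr hi
      · exact fun hmem => hi ((h i).mp hmem)
    · intro h i
      have := h i
      by_cases hi : i ∈ s <;> simp only [hi, if_true, if_false, iff_true, iff_false] at this ⊢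
      · exact this
      · exact this
  have hpiecemeas : ∀ s : Finset (Fin m),
      MeasurableSet {ω | Finset.univ.filter (fun i : Fin m => G i ω ≤ t) = s} := by
    intro s
    rw [hpiece s]
    exact MeasurableSet.iInter fun i => by
      by_cases hi : i ∈ s <;> simp only [hi, if_true, if_false]
      exacts [hBmeas i, (hBmeas i).compl]
  -- measure of each piece by independence
  have hmu : ∀ s ∈ Finset.powersetCard p (Finset.univ : Finset (Fin m)),
      μ {ω | Finset.univ.filter (fun i : Fin m => G i ω ≤ t) = s}
        = q ^ p * (1 - q) ^ (m - p) := by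
    intro s hs
    rw [Finset.mem_powersetCard_univ] at hs
    rw [hpiece s]
    rw [hindep.meas_iInter (fun i => ?_)]
    · have hval : ∀ i, μ (if i ∈ s then B i else (B i)ᶜ)
          = if i ∈ s then q else (1 - q) := by
        intro i
        by_cases hi : i ∈ s <;> simp only [hi, if_true, if_false]
        · exact hq i
        · rw [measure_compl (hBmeas i) (measure_ne_top μ _), measure_univ, hq i]
      simp only [hval]
      rw [Finset.prod_ite, Finset.prod_const, Finset.prod_const]
      congr 1
      · congr 1
        rw [Finset.filter_univ_mem, hs]
      · congr 1
        have : Finset.univ.filter (fun i => i ∉ s) = sᶜ := by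
          ext i; simp
        rw [this, Finset.card_compl, hs, Fintype.card_fin]
    · by_cases hi : i ∈ s <;> simp only [hi, if_true, if_false]
      · exact ⟨Iic t, measurableSet_Iic, rfl⟩
      · exact ⟨(Iic t)ᶜ, measurableSet_Iic.compl, rfl⟩
  -- sum up
  rw [hset, measure_biUnion_finset ?_ (fun s _ => hpiecemeas s)]
  · rw [Finset.sum_congr rfl hmu, Finset.sum_const, Finset.card_powersetCard,
      Finset.card_univ, Fintype.card_fin, nsmul_eq_mul, mul_assoc]
  · intro s hs s' hs' hss'
    rw [Function.onFun]
    refine Set.disjoint_left.mpr fun ω hω hω' => hss' ?_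
    rw [mem_setOf_eq] at hω hω'
    rw [← hω, ← hω']


lemma gamma_tail_lim (k : ℕ) (hk : 1 ≤ k) (a : ℝ) (ha : 0 < a) (am : ℕ → ℝ)
    (ham : ∀ m, 0 < am m)
    (hlim : Tendsto (fun m : ℕ => (m : ℝ) * am m ^ k) atTop (nhds a))
    (t : ℝ) (ht : 0 ≤ t) :
    Tendsto (fun m : ℕ => (m : ℝ) * (gammaMeasure k (am m) (Iic t)).toReal) atTop
      (nhds (a * t ^ k / (Nat.factorial k))) := by
  have hkR : (0:ℝ) < (k:ℝ) := by exact_mod_cast hk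
  have hk1 : ((k - 1 : ℕ) : ℝ) = (k : ℝ) - 1 := by
    rw [Nat.cast_sub hk]; simp
  set c : ℝ := ((k - 1).factorial : ℝ) with hc
  have hc0 : 0 < c := by positivity
  have hGamma : Real.Gamma (k : ℝ) = c := by
    rw [show (k : ℝ) = ((k - 1 : ℕ) : ℝ) + 1 by rw [hk1]; ring]
    exact_mod_cast Real.Gamma_nat_eq_factorial (k - 1)
  -- explicit formula for the tail probability
  have hcg : ∀ r : ℝ, Continuous fun x : ℝ => x ^ (k - 1) * Real.exp (-(r * x)) :=
    fun r => (continuous_pow _).mul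
      (Real.continuous_exp.comp ((continuous_const.mul continuous_id).neg))
  have key : ∀ r : ℝ, 0 < r → (gammaMeasure k r (Iic t)).toReal
      = r ^ k / c * ∫ x in (0:ℝ)..t, x ^ (k - 1) * Real.exp (-(r * x)) := by
    intro r hr
    haveI := isProbabilityMeasure_gammaMeasure hkR hr
    have h1 : (gammaMeasure (k : ℝ) r (Iic t)).toReal = ∫ x in Iic t, gammaPDFReal k r x := by
      rw [← cdf_gammaMeasure_eq_integral hkR hr t, cdf_eq_real, measureReal_def]
    have heq : EqOn (gammaPDFReal k r)
        (fun x => r ^ k / c * (x ^ (k - 1) * Real.exp (-(r * x)))) (Icc 0 t) := by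
      intro x hx
      rw [gammaPDFReal, if_pos hx.1, hGamma,
        show ((k : ℝ) - 1) = ((k - 1 : ℕ) : ℝ) from hk1.symm, Real.rpow_natCast,
        Real.rpow_natCast]
      ring
    have hzero : EqOn (gammaPDFReal k r) (fun _ => (0:ℝ)) (Iio 0) := fun x hx => by
      rw [gammaPDFReal, if_neg (not_le.mpr hx)]
    have hsplit : Iic t = Iio 0 ∪ Icc 0 t := by
      ext x
      simp only [mem_Iic, mem_union, mem_Iio, mem_Icc]
      constructor
      · intro h
        rcases lt_or_ge x 0 with h0 | h0
        · exact Or.inl h0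
        · exact Or.inr ⟨h0, h⟩
      · rintro (h | ⟨h1, h2⟩)
        · exact h.le.trans ht
        · exact h2
    have hdisj : Disjoint (Iio (0:ℝ)) (Icc 0 t) :=
      (Set.Iio_disjoint_Ici le_rfl).mono_right Set.Icc_subset_Ici_self
    have hcont : Continuous (fun x : ℝ => r ^ k / c * (x ^ (k - 1) * Real.exp (-(r * x)))) :=
      continuous_const.mul (hcg r)
    have hInt1 : IntegrableOn (gammaPDFReal k r) (Iio 0) := by
      rw [integrableOn_congr_fun hzero measurableSet_Iio]
      exact integrableOn_zero
    have hInt2 : IntegrableOn (gammaPDFReal k r) (Icc 0 t) := by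
      rw [integrableOn_congr_fun heq measurableSet_Icc]
      exact hcont.integrableOn_Icc
    rw [h1, hsplit, setIntegral_union hdisj measurableSet_Icc hInt1 hInt2,
      setIntegral_congr_fun measurableSet_Iio hzero,
      setIntegral_congr_fun measurableSet_Icc heq, MeasureTheory.integral_zero, zero_add,
      MeasureTheory.integral_const_mul, MeasureTheory.integral_Icc_eq_integral_Ioc,
      ← intervalIntegral.integral_of_le ht]
  -- am m → 0
  have hpow : Tendsto (fun m : ℕ => am m ^ k) atTop (nhds 0) := by
    have h1 : Tendsto (fun m : ℕ => ((m : ℝ) * am m ^ k) * ((m : ℝ))⁻¹) atTop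
        (nhds (a * 0)) := hlim.mul tendsto_inv_atTop_nhds_zero_nat
    rw [mul_zero] at h1
    refine h1.congr' ?_
    filter_upwards [eventually_gt_atTop 0] with m hm
    have : (m : ℝ) ≠ 0 := Nat.cast_ne_zero.mpr hm.ne'
    field_simp
  have ham0 : Tendsto am atTop (nhds 0) := by
    have hcont : ContinuousAt (fun x : ℝ => x ^ ((k : ℝ))⁻¹) 0 :=
      Real.continuousAt_rpow_const 0 _ (Or.inr (by positivity))
    have h2 := hcont.tendsto.comp hpow
    rw [Real.zero_rpow (by positivity)] at h2
    refine h2.congr fun m => ?_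
    simp only [Function.comp_apply]
    rw [← Real.rpow_natCast (am m) k, ← Real.rpow_mul (ham m).le,
      mul_inv_cancel₀ hkR.ne', Real.rpow_one]
  -- squeeze for the integral
  have hint_pow : ∫ x in (0:ℝ)..t, x ^ (k - 1) = t ^ k / (k : ℝ) := by
    rw [integral_pow, Nat.sub_add_cancel hk, zero_pow (by omega), sub_zero, hk1]
    ring_nf
  have hIup : ∀ m : ℕ, (∫ x in (0:ℝ)..t, x ^ (k - 1) * Real.exp (-(am m * x)))
      ≤ t ^ k / (k : ℝ) := by
    intro m
    rw [← hint_pow]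
    refine intervalIntegral.integral_mono_on ht ?_ ?_ fun x hx => ?_
    · exact (hcg (am m)).intervalIntegrable _ _
    · exact (continuous_pow (k-1)).intervalIntegrable _ _
    · have h1 : Real.exp (-(am m * x)) ≤ 1 := by
        rw [Real.exp_le_one_iff]
        have := (ham m).le
        nlinarith [hx.1]
      calc x ^ (k-1) * Real.exp (-(am m * x)) ≤ x ^ (k-1) * 1 :=
            mul_le_mul_of_nonneg_left h1 (pow_nonneg hx.1 _)
        _ = x ^ (k-1) := mul_one _
  have hIlow : ∀ m : ℕ, Real.exp (-(am m * t)) * (t ^ k / (k : ℝ))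
      ≤ ∫ x in (0:ℝ)..t, x ^ (k - 1) * Real.exp (-(am m * x)) := by
    intro m
    rw [← hint_pow, ← intervalIntegral.integral_const_mul]
    refine intervalIntegral.integral_mono_on ht ?_ ?_ fun x hx => ?_
    · exact (continuous_const.mul (continuous_pow (k-1))).intervalIntegrable _ _
    · exact (hcg (am m)).intervalIntegrable _ _
    · have h1 : Real.exp (-(am m * t)) ≤ Real.exp (-(am m * x)) := by
        rw [Real.exp_le_exp]
        have := (ham m).le
        nlinarith [hx.2]
      calc Real.exp (-(am m * t)) * x ^ (k-1) ≤ Real.exp (-(am m * x)) * x ^ (k-1) :=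
            mul_le_mul_of_nonneg_right h1 (pow_nonneg hx.1 _)
        _ = x ^ (k-1) * Real.exp (-(am m * x)) := mul_comm _ _
  have hexp : Tendsto (fun m : ℕ => Real.exp (-(am m * t))) atTop (nhds 1) := by
    have h1 : Tendsto (fun m : ℕ => -(am m * t)) atTop (nhds (-(0 * t))) :=
      (ham0.mul tendsto_const_nhds).neg
    rw [zero_mul, neg_zero] at h1
    have := (Real.continuous_exp.tendsto 0).comp h1
    rwa [Real.exp_zero] at this
  have hI : Tendsto (fun m : ℕ => ∫ x in (0:ℝ)..t, x ^ (k - 1) * Real.exp (-(am m * x)))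
      atTop (nhds (t ^ k / (k : ℝ))) := by
    have hlow : Tendsto (fun m : ℕ => Real.exp (-(am m * t)) * (t ^ k / (k : ℝ))) atTop
        (nhds (1 * (t ^ k / (k : ℝ)))) := hexp.mul tendsto_const_nhds
    rw [one_mul] at hlow
    exact tendsto_of_tendsto_of_tendsto_of_le_of_le hlow tendsto_const_nhds hIlow hIup
  -- assemble
  have hfac : (Nat.factorial k : ℝ) = (k : ℝ) * c := by
    conv_lhs => rw [show k = (k - 1) + 1 from (Nat.sub_add_cancel hk).symm]
    rw [Nat.factorial_succ]
    push_cast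
    rw [hk1]
    ring
  have hfinal : Tendsto (fun m : ℕ => ((m : ℝ) * am m ^ k) *
      ((∫ x in (0:ℝ)..t, x ^ (k - 1) * Real.exp (-(am m * x))) / c)) atTop
      (nhds (a * ((t ^ k / (k : ℝ)) / c))) := hlim.mul (hI.div_const c)
  have hval : a * ((t ^ k / (k : ℝ)) / c) = a * t ^ k / (Nat.factorial k) := by
    rw [hfac]
    field_simp
  rw [hval] at hfinal
  refine hfinal.congr fun m => ?_
  rw [key (am m) (ham m)]
  ring


lemma binomial_tendsto_poisson (lam : ℝ) (q : ℕ → ℝ)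
    (hq0 : ∀ m, 0 ≤ q m)
    (hmq : Tendsto (fun m : ℕ => (m : ℝ) * q m) atTop (nhds lam)) (p : ℕ) :
    Tendsto (fun m : ℕ => (m.choose p : ℝ) * q m ^ p * (1 - q m) ^ (m - p)) atTop
      (nhds (lam ^ p * Real.exp (-lam) / (p.factorial : ℝ))) := by
  have hq_to : Tendsto q atTop (nhds 0) := by
    have h1 : Tendsto (fun m : ℕ => ((m : ℝ) * q m) * ((m : ℝ))⁻¹) atTop (nhds (lam * 0)) :=
      hmq.mul tendsto_inv_atTop_nhds_zero_nat
    rw [mul_zero] at h1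
    refine h1.congr' ?_
    filter_upwards [eventually_gt_atTop 0] with m hm
    have : (m : ℝ) ≠ 0 := Nat.cast_ne_zero.mpr hm.ne'
    field_simp
  have hsmall : ∀ᶠ m in atTop, q m ≤ 1/2 := hq_to.eventually_le_const (by norm_num)
  -- log bound squeeze
  have hlog : Tendsto (fun m : ℕ => (m : ℝ) * Real.log (1 - q m)) atTop (nhds (-lam)) := by
    have hlow : Tendsto (fun m : ℕ => -(((m : ℝ) * q m) * (1 - q m)⁻¹)) atTop (nhds (-lam)) := by
      have := (hmq.mul ((tendsto_const_nhds.sub hq_to).inv₀ (by norm_num : (1 - (0:ℝ)) ≠ 0))).neg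
      simpa using this
    have hup : Tendsto (fun m : ℕ => -((m : ℝ) * q m)) atTop (nhds (-lam)) := hmq.neg
    refine tendsto_of_tendsto_of_tendsto_of_le_of_le' hlow hup ?_ ?_
    · filter_upwards [hsmall] with m hm
      have h1 : (0:ℝ) < 1 - q m := by linarith
      have h2 : Real.log (1 - q m)⁻¹ ≤ (1 - q m)⁻¹ - 1 :=
        Real.log_le_sub_one_of_pos (by positivity)
      rw [Real.log_inv] at h2
      have h3 : -(q m * (1 - q m)⁻¹) ≤ Real.log (1 - q m) := by
        have : (1 - q m)⁻¹ - 1 = q m * (1 - q m)⁻¹ := by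
          field_simp
          ring
        linarith [this ▸ h2]
      calc -((m : ℝ) * q m * (1 - q m)⁻¹) = (m : ℝ) * (-(q m * (1 - q m)⁻¹)) := by ring
        _ ≤ (m : ℝ) * Real.log (1 - q m) :=
          mul_le_mul_of_nonneg_left h3 (Nat.cast_nonneg m)
    · filter_upwards [hsmall] with m hm
      have h1 : (0:ℝ) < 1 - q m := by linarith
      have h2 : Real.log (1 - q m) ≤ -(q m) := by
        have := Real.log_le_sub_one_of_pos h1
        linarith
      calc (m : ℝ) * Real.log (1 - q m) ≤ (m : ℝ) * (-(q m)) :=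
            mul_le_mul_of_nonneg_left h2 (Nat.cast_nonneg m)
        _ = -((m : ℝ) * q m) := by ring
  have hB : Tendsto (fun m : ℕ => (1 - q m) ^ m) atTop (nhds (Real.exp (-lam))) := by
    have h := (Real.continuous_exp.tendsto _).comp hlog
    refine h.congr' ?_
    filter_upwards [hsmall] with m hm
    have h1 : (0:ℝ) < 1 - q m := by linarith
    rw [Function.comp_apply, ← Real.log_pow, Real.exp_log (by positivity)]
  have hC : Tendsto (fun m : ℕ => (1 - q m) ^ p) atTop (nhds 1) := by
    have h := ((tendsto_const_nhds (x := (1:ℝ))).sub hq_to).pow p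
    simpa using h
  have hA : Tendsto (fun m : ℕ => ∏ j ∈ Finset.range p, (((m : ℝ) - j) * q m)) atTop
      (nhds (lam ^ p)) := by
    have : (lam ^ p) = ∏ _j ∈ Finset.range p, lam := by
      simp
    rw [this]
    refine tendsto_finset_prod _ fun j _ => ?_
    have : Tendsto (fun m : ℕ => (m : ℝ) * q m - (j : ℝ) * q m) atTop (nhds (lam - (j:ℝ) * 0)) :=
      hmq.sub (tendsto_const_nhds.mul hq_to)
    rw [mul_zero, sub_zero] at this
    refine this.congr fun m => by ring
  have hF : Tendsto (fun m : ℕ =>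
      (∏ j ∈ Finset.range p, (((m : ℝ) - j) * q m)) / (p.factorial : ℝ)
        * ((1 - q m) ^ m / (1 - q m) ^ p)) atTop
      (nhds (lam ^ p / (p.factorial : ℝ) * (Real.exp (-lam) / 1))) :=
    (hA.div_const _).mul (hB.div hC one_ne_zero)
  rw [div_one, div_mul_eq_mul_div] at hF
  refine hF.congr' ?_
  filter_upwards [hsmall, eventually_ge_atTop p] with m hm hpm
  have h1 : (0:ℝ) < 1 - q m := by linarith
  have hf0 : (p.factorial : ℝ) ≠ 0 := Nat.cast_ne_zero.mpr p.factorial_ne_zero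
  have hcast : ((m.descFactorial p : ℕ) : ℝ) = ∏ j ∈ Finset.range p, ((m : ℝ) - j) := by
    rw [Nat.descFactorial_eq_prod_range, Nat.cast_prod]
    refine Finset.prod_congr rfl fun j hj => ?_
    exact_mod_cast Nat.cast_sub (le_trans (Finset.mem_range.mp hj).le hpm)
  have hchoose : (m.choose p : ℝ) = (∏ j ∈ Finset.range p, ((m : ℝ) - j)) / (p.factorial : ℝ) := by
    rw [eq_div_iff hf0, ← hcast]
    rw [Nat.descFactorial_eq_factorial_mul_choose]
    push_cast
    ring
  rw [Finset.prod_mul_distrib, Finset.prod_const, Finset.card_range, hchoose,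
    pow_sub₀ _ h1.ne' hpm]
  ring

/-- Convergence of the binomial counts of i.i.d. Gamma(k, 1/a_m) variables below level `t`
to a Poisson(a t^k / k!) distribution, when `m a_m^k → a ∈ (0,∞)`. -/
theorem gamma_count_tendsto_poisson
    (k : ℕ) (hk : 1 ≤ k) (a : ℝ) (ha : 0 < a)
    (am : ℕ → ℝ) (ham : ∀ m, 0 < am m)
    (hlim : Tendsto (fun m : ℕ => (m : ℝ) * (am m) ^ k) atTop (nhds a))
    (Ω : ℕ → Type*) (mΩ : ∀ m, MeasurableSpace (Ω m))
    (μ : ∀ m, Measure (Ω m)) (hμ : ∀ m, IsProbabilityMeasure (μ m))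
    (G : ∀ m, Fin m → Ω m → ℝ)
    (hmeas : ∀ m i, Measurable (G m i))
    (hindep : ∀ m, iIndepFun (G m) (μ m))
    (hlaw : ∀ m i, Measure.map (G m i) (μ m) = gammaMeasure k (am m))
    (t : ℝ) (ht : 0 ≤ t) (p : ℕ) :
    Tendsto
      (fun m : ℕ =>
        ((μ m) {ω | (Finset.univ.filter (fun i : Fin m => G m i ω ≤ t)).card = p}).toReal)
      atTop
      (nhds ((a * t ^ k / (Nat.factorial k)) ^ p *
        Real.exp (-(a * t ^ k / (Nat.factorial k))) / (Nat.factorial p))) := by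
  have hkR : (0:ℝ) < (k:ℝ) := by exact_mod_cast hk
  set Q : ℕ → ℝ≥0∞ := fun m => gammaMeasure k (am m) (Iic t) with hQdef
  have hQprob : ∀ m, Q m ≤ 1 := fun m => by
    haveI := isProbabilityMeasure_gammaMeasure hkR (ham m)
    exact prob_le_one
  set q : ℕ → ℝ := fun m => (Q m).toReal with hqdef
  have hq0 : ∀ m, 0 ≤ q m := fun m => ENNReal.toReal_nonneg
  have hmq : Tendsto (fun m : ℕ => (m : ℝ) * q m) atTop
      (nhds (a * t ^ k / (Nat.factorial k))) :=
    gamma_tail_lim k hk a ha am ham hlim t ht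
  have hcount : ∀ m,
      ((μ m) {ω | (Finset.univ.filter (fun i : Fin m => G m i ω ≤ t)).card = p}).toReal
        = (m.choose p : ℝ) * q m ^ p * (1 - q m) ^ (m - p) := by
    intro m
    haveI := hμ m
    have hqm : ∀ i, (μ m) (G m i ⁻¹' Iic t) = Q m := fun i => by
      show (μ m) (G m i ⁻¹' Iic t) = gammaMeasure k (am m) (Iic t)
      rw [← hlaw m i, Measure.map_apply (hmeas m i) measurableSet_Iic]
    rw [meas_count_eq (μ m) (G m) (hmeas m) (hindep m) t (Q m) hqm p,
      ENNReal.toReal_mul, ENNReal.toReal_mul, ENNReal.toReal_pow, ENNReal.toReal_pow,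
      ENNReal.toReal_natCast, ENNReal.toReal_sub_of_le (hQprob m) ENNReal.one_ne_top,
      ENNReal.toReal_one]
  have h := binomial_tendsto_poisson (a * t ^ k / (Nat.factorial k)) q hq0 hmq p
  exact h.congr fun m => (hcount m).symm
end

section
/- Let k ≥ 1 be an integer, a_m > 0 with m·a_m^k → a ∈ (0,∞), G a Gamma(k,1) random variable, and t > s ≥ 0. Then the conditional probability P(G ≤ a_m t | G > a_m s) satisfies m·P(G ≤ a_m t | G > a_m s) → a(t^k − s^k)/k! as m → ∞. -/
set_option maxHeartbeats 1000000


open MeasureTheory Real Set Filter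

lemma gamma_aux_int (k : ℕ) (hk : 1 ≤ k) (a b c : ℝ) :
    (∫ x in a..b, x ^ (k - 1) * c / (Nat.factorial (k - 1)))
      = c * (b ^ k - a ^ k) / (Nat.factorial k) := by
  have h1 : ∀ x : ℝ, x ^ (k - 1) * c / (Nat.factorial (k - 1))
      = (c / (Nat.factorial (k - 1))) * x ^ (k - 1) := fun x => by ring
  simp_rw [h1]
  rw [intervalIntegral.integral_const_mul, integral_pow]
  have hkk : k - 1 + 1 = k := Nat.succ_pred_eq_of_pos hk
  rw [hkk]
  have hfac : (Nat.factorial k : ℝ) = k * Nat.factorial (k - 1) := by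
    rw [← Nat.mul_factorial_pred (by omega)]; push_cast; ring
  have hk0 : (0:ℝ) < (k : ℝ) := by positivity
  have hf0 : (0:ℝ) < (Nat.factorial (k-1) : ℝ) := by positivity
  rw [hfac]
  field_simp
  ring_nf
  rw [Nat.cast_sub hk]; ring
  try exact Or.inl trivial

/-- For a Gamma(k,1) variable `G` and `t > s ≥ 0`, with `m a_m^k → a ∈ (0,∞)`,
`m · P(G ≤ a_m t | G > a_m s) → a (t^k − s^k)/k!`. Here `F` denotes the CDF of `G`. -/
theorem gamma_conditional_prob_asymptotics
    (k : ℕ) (hk : 1 ≤ k) (a : ℝ) (ha : 0 < a)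
    (am : ℕ → ℝ) (ham : ∀ m, 0 < am m)
    (hlim : Tendsto (fun m : ℕ => (m : ℝ) * (am m) ^ k) atTop (nhds a))
    (F : ℝ → ℝ)
    (hF : ∀ u : ℝ, F u = ∫ x in Set.Ioc (0:ℝ) u,
      x ^ (k - 1) * Real.exp (-x) / (Nat.factorial (k - 1)))
    (s t : ℝ) (hs : 0 ≤ s) (hst : s < t) :
    Tendsto
      (fun m : ℕ => (m : ℝ) * ((F (am m * t) - F (am m * s)) / (1 - F (am m * s))))
      atTop
      (nhds (a * (t ^ k - s ^ k) / (Nat.factorial k))) := by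
  set f : ℝ → ℝ := fun x => x ^ (k - 1) * Real.exp (-x) / (Nat.factorial (k - 1)) with hf
  have hfc : Continuous f := by
    apply Continuous.div_const
    exact (continuous_pow _).mul (Real.continuous_exp.comp continuous_neg)
  -- F as interval integral
  have hFi : ∀ u : ℝ, 0 ≤ u → F u = ∫ x in (0:ℝ)..u, f x := by
    intro u hu
    rw [hF u, intervalIntegral.integral_of_le hu]
  -- am → 0
  have hamk0 : Tendsto (fun m => (am m) ^ k) atTop (nhds 0) := by
    have h2 : Tendsto (fun m : ℕ => ((m : ℝ) * (am m) ^ k) * ((m:ℝ))⁻¹) atTop (nhds (a * 0)) :=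
      hlim.mul (tendsto_inv_atTop_zero.comp tendsto_natCast_atTop_atTop)
    rw [mul_zero] at h2
    apply h2.congr'
    filter_upwards [eventually_gt_atTop 0] with m hm
    have : (m : ℝ) ≠ 0 := by positivity
    field_simp
  have ham0 : Tendsto am atTop (nhds 0) := by
    have h3 : Tendsto (fun m => ((am m) ^ k) ^ ((k:ℝ)⁻¹)) atTop (nhds ((0:ℝ) ^ ((k:ℝ)⁻¹))) :=
      hamk0.rpow_const (Or.inr (by positivity))
    rw [Real.zero_rpow (by positivity)] at h3
    apply h3.congr
    intro m
    exact Real.pow_rpow_inv_natCast (ham m).le (by omega)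
  have hts : t ^ k - s ^ k > 0 := sub_pos.mpr (pow_lt_pow_left₀ hst hs (by omega))
  have ht0 : 0 < t := lt_of_le_of_lt hs hst
  -- difference as interval integral
  have hdiff : ∀ m, F (am m * t) - F (am m * s)
      = ∫ x in (am m * s)..(am m * t), f x := by
    intro m
    rw [hFi _ (mul_nonneg (ham m).le ht0.le), hFi _ (mul_nonneg (ham m).le hs)]
    exact intervalIntegral.integral_interval_sub_left
      (hfc.intervalIntegrable _ _) (hfc.intervalIntegrable _ _)
  have hab : ∀ m, am m * s ≤ am m * t :=
    fun m => mul_le_mul_of_nonneg_left hst.le (ham m).le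
  -- upper bound
  have hupper : ∀ m, F (am m * t) - F (am m * s)
      ≤ (am m) ^ k * (t ^ k - s ^ k) / (Nat.factorial k) := by
    intro m
    rw [hdiff m]
    have h4 : (∫ x in (am m * s)..(am m * t), f x)
        ≤ ∫ x in (am m * s)..(am m * t), x ^ (k - 1) * 1 / (Nat.factorial (k - 1)) := by
      apply intervalIntegral.integral_mono_on (hab m) (hfc.intervalIntegrable _ _)
        ((Continuous.intervalIntegrable (by continuity) _ _))
      intro x hx
      have hx0 : 0 ≤ x := le_trans (mul_nonneg (ham m).le hs) hx.1
      have : Real.exp (-x) ≤ 1 := Real.exp_le_one_iff.mpr (by linarith)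
      apply div_le_div_of_nonneg_right ?_ (by positivity)
      · nlinarith [pow_nonneg hx0 (k-1)]
    calc _ ≤ _ := h4
      _ = 1 * ((am m * t) ^ k - (am m * s) ^ k) / (Nat.factorial k) := gamma_aux_int k hk _ _ _
      _ = (am m) ^ k * (t ^ k - s ^ k) / (Nat.factorial k) := by rw [mul_pow, mul_pow]; ring
  -- lower bound
  have hlower : ∀ m, Real.exp (-(am m * t)) * ((am m) ^ k * (t ^ k - s ^ k)) / (Nat.factorial k)
      ≤ F (am m * t) - F (am m * s) := by
    intro m
    rw [hdiff m]
    have h4 : (∫ x in (am m * s)..(am m * t),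
          x ^ (k - 1) * Real.exp (-(am m * t)) / (Nat.factorial (k - 1)))
        ≤ ∫ x in (am m * s)..(am m * t), f x := by
      apply intervalIntegral.integral_mono_on (hab m)
        ((Continuous.intervalIntegrable (by continuity) _ _)) (hfc.intervalIntegrable _ _)
      intro x hx
      have hx0 : 0 ≤ x := le_trans (mul_nonneg (ham m).le hs) hx.1
      have : Real.exp (-(am m * t)) ≤ Real.exp (-x) := Real.exp_le_exp.mpr (by linarith [hx.2])
      apply div_le_div_of_nonneg_right ?_ (by positivity)
      · nlinarith [pow_nonneg hx0 (k-1)]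
    calc Real.exp (-(am m * t)) * ((am m) ^ k * (t ^ k - s ^ k)) / (Nat.factorial k)
        = Real.exp (-(am m * t)) * ((am m * t) ^ k - (am m * s) ^ k) / (Nat.factorial k) := by
          rw [mul_pow, mul_pow]; ring
      _ = _ := (gamma_aux_int k hk _ _ _).symm
      _ ≤ _ := h4
  -- numerator limit
  have hnum : Tendsto (fun m : ℕ => (m:ℝ) * (F (am m * t) - F (am m * s))) atTop
      (nhds (a * (t ^ k - s ^ k) / (Nat.factorial k))) := by
    have hexp : Tendsto (fun m => Real.exp (-(am m * t))) atTop (nhds 1) := by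
      have h5 : Tendsto (fun m => -(am m * t)) atTop (nhds 0) := by
        simpa using (ham0.mul_const t).neg
      have := (Real.continuous_exp.tendsto 0).comp h5
      simpa [Function.comp_def] using this
    have hlow : Tendsto (fun m : ℕ =>
        Real.exp (-(am m * t)) * (((m:ℝ) * (am m) ^ k) * (t ^ k - s ^ k)) / (Nat.factorial k))
        atTop (nhds (a * (t ^ k - s ^ k) / (Nat.factorial k))) := by
      have := ((hexp.mul (hlim.mul_const (t ^ k - s ^ k))).div_const ((Nat.factorial k : ℝ)))
      simpa using this
    have hhigh : Tendsto (fun m : ℕ =>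
        ((m:ℝ) * (am m) ^ k) * (t ^ k - s ^ k) / (Nat.factorial k))
        atTop (nhds (a * (t ^ k - s ^ k) / (Nat.factorial k))) := by
      have := (hlim.mul_const (t ^ k - s ^ k)).div_const ((Nat.factorial k : ℝ))
      simpa [mul_div_assoc] using this
    apply tendsto_of_tendsto_of_tendsto_of_le_of_le hlow hhigh
    · intro m
      have := hlower m
      have hm0 : (0:ℝ) ≤ (m:ℝ) := by positivity
      calc Real.exp (-(am m * t)) * (((m:ℝ) * (am m) ^ k) * (t ^ k - s ^ k)) / (Nat.factorial k)
          = (m:ℝ) * (Real.exp (-(am m * t)) * ((am m) ^ k * (t ^ k - s ^ k)) / (Nat.factorial k)) := by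
            ring
        _ ≤ _ := mul_le_mul_of_nonneg_left this hm0
    · intro m
      have := hupper m
      have hm0 : (0:ℝ) ≤ (m:ℝ) := by positivity
      calc (m:ℝ) * (F (am m * t) - F (am m * s))
          ≤ (m:ℝ) * ((am m) ^ k * (t ^ k - s ^ k) / (Nat.factorial k)) :=
            mul_le_mul_of_nonneg_left this hm0
        _ = ((m:ℝ) * (am m) ^ k) * (t ^ k - s ^ k) / (Nat.factorial k) := by ring
  -- denominator limit : F (am m * s) → 0
  have hFs : Tendsto (fun m : ℕ => F (am m * s)) atTop (nhds 0) := by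
    have hlow : ∀ m, (0:ℝ) ≤ F (am m * s) := by
      intro m
      rw [hFi _ (mul_nonneg (ham m).le hs)]
      apply intervalIntegral.integral_nonneg (mul_nonneg (ham m).le hs)
      intro x hx
      have hx0 : 0 ≤ x := hx.1
      positivity
    have hhigh : ∀ m, F (am m * s) ≤ (am m * s) ^ k / (Nat.factorial k) := by
      intro m
      rw [hFi _ (mul_nonneg (ham m).le hs)]
      have h4 : (∫ x in (0:ℝ)..(am m * s), f x)
          ≤ ∫ x in (0:ℝ)..(am m * s), x ^ (k - 1) * 1 / (Nat.factorial (k - 1)) := by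
        apply intervalIntegral.integral_mono_on (mul_nonneg (ham m).le hs) (hfc.intervalIntegrable _ _)
          ((Continuous.intervalIntegrable (by continuity) _ _))
        intro x hx
        have hx0 : 0 ≤ x := hx.1
        have : Real.exp (-x) ≤ 1 := Real.exp_le_one_iff.mpr (by linarith)
        apply div_le_div_of_nonneg_right ?_ (by positivity)
        · nlinarith [pow_nonneg hx0 (k-1)]
      calc _ ≤ _ := h4
        _ = 1 * ((am m * s) ^ k - 0 ^ k) / (Nat.factorial k) := gamma_aux_int k hk _ _ _
        _ = (am m * s) ^ k / (Nat.factorial k) := by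
            rw [zero_pow (by omega)]; ring
    have hh : Tendsto (fun m : ℕ => (am m * s) ^ k / (Nat.factorial k)) atTop (nhds 0) := by
      have := ((ham0.mul_const s).pow k).div_const ((Nat.factorial k : ℝ))
      simpa [zero_pow (show k ≠ 0 by omega)] using this
    exact tendsto_of_tendsto_of_tendsto_of_le_of_le tendsto_const_nhds hh hlow hhigh
  have hden : Tendsto (fun m : ℕ => 1 - F (am m * s)) atTop (nhds 1) := by
    have := (tendsto_const_nhds (x := (1:ℝ)) (f := atTop (α := ℕ))).sub hFs
    simpa using this
  have := hnum.div hden one_ne_zero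
  rw [div_one] at this
  apply this.congr'
  filter_upwards with m
  simp [Pi.div_apply, mul_div_assoc]
end

section
/- Fix an integer k ≥ 1 and a constant C > 0. Suppose μ_n(t) are random variables with values in [0,1] satisfying n·E[μ_n(t)] ≤ C p(t)/(1−p(t))², where p(t) = P(G > t) is the tail of a Gamma(k,1) variable, and let δ_n = σ^{1/k} n^{−1/(2k)} for some σ > 0. Then lim_{t→∞} limsup_{n} E[∫_t^∞ μ_n(δ_n s) ds] = 0. -/
open MeasureTheory Real Set Filter

lemma aux_pow_exp (m : ℕ) {x : ℝ} (hx : 0 ≤ x) :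
    x ^ m * rexp (-x) / m.factorial ≤ 2 ^ m * rexp (-2⁻¹ * x) := by
  have hfac : (0:ℝ) < m.factorial := by positivity
  rw [div_le_iff₀ hfac]
  have h1 : (x/2) ^ m / m.factorial ≤ rexp (x/2) :=
    Real.pow_div_factorial_le_exp (x := x/2) (by positivity) m
  have h2 : x ^ m ≤ 2 ^ m * m.factorial * rexp (x/2) := by
    have h3 : (x/2) ^ m ≤ rexp (x/2) * m.factorial :=
      (div_le_iff₀ hfac).1 h1
    have hx2 : x ^ m = 2 ^ m * (x/2) ^ m := by
      rw [← mul_pow]; ring_nf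
    rw [hx2]
    calc (2:ℝ) ^ m * (x/2) ^ m ≤ 2 ^ m * (rexp (x/2) * m.factorial) := by
          exact mul_le_mul_of_nonneg_left h3 (by positivity)
      _ = 2 ^ m * m.factorial * rexp (x/2) := by ring
  calc x ^ m * rexp (-x) ≤ (2 ^ m * m.factorial * rexp (x/2)) * rexp (-x) := by
        gcongr
    _ = 2 ^ m * rexp (-2⁻¹ * x) * m.factorial := by
        rw [mul_assoc, ← Real.exp_add]; ring_nf

lemma aux_integrable (m : ℕ) {t : ℝ} (ht : 0 ≤ t) :
    IntegrableOn (fun x : ℝ => x ^ m * rexp (-x) / m.factorial) (Ioi t) := by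
  have hcont : Continuous (fun x : ℝ => x ^ m * rexp (-x) / m.factorial) := by
    continuity
  refine Integrable.mono' ((exp_neg_integrableOn_Ioi t (by norm_num : (0:ℝ) < 2⁻¹)).const_mul
    ((2:ℝ) ^ m)) hcont.aestronglyMeasurable ?_
  filter_upwards [self_mem_ae_restrict measurableSet_Ioi] with x hx
  have hx0 : 0 ≤ x := le_trans ht (le_of_lt hx)
  rw [Real.norm_eq_abs, abs_of_nonneg (by positivity)]
  exact aux_pow_exp m hx0

lemma aux_exp_int (u : ℝ) {b : ℝ} (hb : 0 < b) :
    ∫ x in Ioi u, rexp (-b * x) = b⁻¹ * rexp (-b * u) := by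
  have h := integral_comp_mul_left_Ioi (fun y => rexp (-y)) u hb
  simp only [smul_eq_mul, integral_exp_neg_Ioi] at h
  simpa only [neg_mul] using h

lemma aux_p_le (k : ℕ) (hk : 1 ≤ k) (p : ℝ → ℝ)
    (hp : ∀ t : ℝ, p t = ∫ x in Set.Ioi t,
      x ^ (k - 1) * Real.exp (-x) / (Nat.factorial (k - 1)))
    {u : ℝ} (hu : 0 ≤ u) : p u ≤ 2 ^ k * rexp (-2⁻¹ * u) := by
  rw [hp]
  calc (∫ x in Ioi u, x ^ (k-1) * rexp (-x) / ((k-1).factorial : ℝ))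
      ≤ ∫ x in Ioi u, (2:ℝ) ^ (k-1) * rexp (-2⁻¹ * x) := by
        refine setIntegral_mono_on (aux_integrable (k-1) hu)
          ((exp_neg_integrableOn_Ioi u (by norm_num : (0:ℝ) < 2⁻¹)).const_mul _)
          measurableSet_Ioi (fun x hx => aux_pow_exp (k-1) (le_trans hu (le_of_lt hx)))
    _ = 2 ^ (k-1) * (2⁻¹⁻¹ * rexp (-2⁻¹ * u)) := by
        rw [integral_const_mul, aux_exp_int u (by norm_num : (0:ℝ) < 2⁻¹)]
    _ = 2 ^ k * rexp (-2⁻¹ * u) := by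
        have h2 : (2:ℝ) ^ k = 2 ^ (k-1) * 2 := by
          rw [← pow_succ, Nat.sub_add_cancel hk]
        rw [h2]; ring

lemma aux_p_zero (k : ℕ) (hk : 1 ≤ k) (p : ℝ → ℝ)
    (hp : ∀ t : ℝ, p t = ∫ x in Set.Ioi t,
      x ^ (k - 1) * Real.exp (-x) / (Nat.factorial (k - 1))) : p 0 = 1 := by
  have hk0 : (0:ℝ) < k := by exact_mod_cast hk
  have hgam := Real.Gamma_eq_integral hk0
  have hfac : Real.Gamma k = ((k-1).factorial : ℝ) := by
    rw [show (k:ℝ) = ((k-1:ℕ):ℝ) + 1 by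
      push_cast [Nat.cast_sub hk]; ring]
    exact Real.Gamma_nat_eq_factorial (k-1)
  rw [hp]
  have heq : (∫ x in Ioi (0:ℝ), x ^ (k-1) * rexp (-x) / ((k-1).factorial : ℝ))
      = (∫ x in Ioi (0:ℝ), rexp (-x) * x ^ ((k:ℝ) - 1)) / ((k-1).factorial : ℝ) := by
    rw [integral_div]
    congr 1
    refine setIntegral_congr_fun measurableSet_Ioi (fun x hx => ?_)
    rw [show ((k:ℝ) - 1) = ((k-1 : ℕ):ℝ) by push_cast [Nat.cast_sub hk]; ring,
      Real.rpow_natCast]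
    ring
  rw [heq, ← hgam, hfac, div_self (by positivity)]

lemma aux_one_sub (k : ℕ) (hk : 1 ≤ k) (p : ℝ → ℝ)
    (hp : ∀ t : ℝ, p t = ∫ x in Set.Ioi t,
      x ^ (k - 1) * Real.exp (-x) / (Nat.factorial (k - 1)))
    {u : ℝ} (hu : 0 ≤ u) :
    1 - p u = ∫ x in Ioc 0 u, x ^ (k - 1) * rexp (-x) / ((k-1).factorial : ℝ) := by
  have hcont : Continuous (fun x : ℝ => x ^ (k-1) * rexp (-x) / ((k-1).factorial : ℝ)) := by
    continuity
  have hsplit : (∫ x in Ioi (0:ℝ), x ^ (k-1) * rexp (-x) / ((k-1).factorial : ℝ))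
      = (∫ x in Ioc (0:ℝ) u, x ^ (k-1) * rexp (-x) / ((k-1).factorial : ℝ))
        + ∫ x in Ioi u, x ^ (k-1) * rexp (-x) / ((k-1).factorial : ℝ) := by
    rw [← setIntegral_union Ioc_disjoint_Ioi_same measurableSet_Ioi
      hcont.integrableOn_Ioc (aux_integrable (k-1) hu), Ioc_union_Ioi_eq_Ioi hu]
  have h0 := aux_p_zero k hk p hp
  rw [hp 0] at h0
  rw [hp u]
  linarith [hsplit]

lemma aux_lower (k : ℕ) (hk : 1 ≤ k) (p : ℝ → ℝ)
    (hp : ∀ t : ℝ, p t = ∫ x in Set.Ioi t,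
      x ^ (k - 1) * Real.exp (-x) / (Nat.factorial (k - 1)))
    {u : ℝ} (hu : 0 ≤ u) :
    rexp (-u) * u ^ k / (k.factorial : ℝ) ≤ 1 - p u := by
  rw [aux_one_sub k hk p hp hu]
  have hmono : (∫ x in Ioc (0:ℝ) u, rexp (-u) * x ^ (k-1) / ((k-1).factorial : ℝ))
      ≤ ∫ x in Ioc (0:ℝ) u, x ^ (k-1) * rexp (-x) / ((k-1).factorial : ℝ) := by
    refine setIntegral_mono_on (by continuity : Continuous fun x : ℝ =>
        rexp (-u) * x ^ (k-1) / ((k-1).factorial : ℝ)).integrableOn_Ioc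
      (by continuity : Continuous fun x : ℝ =>
        x ^ (k-1) * rexp (-x) / ((k-1).factorial : ℝ)).integrableOn_Ioc
      measurableSet_Ioc (fun x hx => ?_)
    have h1 : rexp (-u) ≤ rexp (-x) := Real.exp_le_exp.2 (by linarith [hx.2])
    have h2 : (0:ℝ) ≤ x ^ (k-1) := pow_nonneg (le_of_lt hx.1) _
    have h3 : (0:ℝ) < ((k-1).factorial : ℝ) := by positivity
    rw [div_le_div_iff₀ h3 h3]
    nlinarith [mul_le_mul_of_nonneg_left h1 h2, mul_pos h3 h3]
  refine le_trans (le_of_eq ?_) hmono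
  have hIoc : (∫ x in Ioc (0:ℝ) u, rexp (-u) * x ^ (k-1) / ((k-1).factorial : ℝ))
      = (rexp (-u) / ((k-1).factorial : ℝ)) * ∫ x in Ioc (0:ℝ) u, x ^ (k-1) := by
    rw [← integral_const_mul]
    refine setIntegral_congr_fun measurableSet_Ioc (fun x hx => ?_)
    ring
  have hval : (∫ x in Ioc (0:ℝ) u, x ^ (k-1)) = u ^ k / k := by
    rw [← intervalIntegral.integral_of_le hu, integral_pow, Nat.sub_add_cancel hk,
      zero_pow (by omega : k ≠ 0), sub_zero,
      show ((k-1:ℕ):ℝ) + 1 = (k:ℝ) by push_cast [Nat.cast_sub hk]; ring]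
  rw [hIoc, hval]
  have hkfac : (k.factorial : ℝ) = (k : ℝ) * ((k-1).factorial : ℝ) := by
    rw [← Nat.cast_mul, ← Nat.mul_factorial_pred (by omega : k ≠ 0)]
  rw [hkfac]
  have hk0 : (0:ℝ) < k := by exact_mod_cast hk
  have : (0:ℝ) < ((k-1).factorial : ℝ) := by positivity
  field_simp

lemma aux_lower_one (k : ℕ) (hk : 1 ≤ k) (p : ℝ → ℝ)
    (hp : ∀ t : ℝ, p t = ∫ x in Set.Ioi t,
      x ^ (k - 1) * Real.exp (-x) / (Nat.factorial (k - 1)))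
    {u : ℝ} (hu : 1 ≤ u) : rexp (-1) / (k.factorial : ℝ) ≤ 1 - p u := by
  have h0 : (0:ℝ) ≤ 1 := zero_le_one
  have h1 : rexp (-1) * 1 ^ k / (k.factorial : ℝ) ≤ 1 - p 1 :=
    aux_lower k hk p hp h0
  have h2 : 1 - p 1 ≤ 1 - p u := by
    rw [aux_one_sub k hk p hp h0, aux_one_sub k hk p hp (le_trans h0 hu)]
    refine setIntegral_mono_set
      (by continuity : Continuous fun x : ℝ =>
        x ^ (k-1) * rexp (-x) / ((k-1).factorial : ℝ)).integrableOn_Ioc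
      ?_ (HasSubset.Subset.eventuallyLE (Ioc_subset_Ioc_right hu))
    filter_upwards [self_mem_ae_restrict measurableSet_Ioc] with x hx
    have : 0 < x := hx.1
    positivity
  simp only [one_pow, mul_one] at h1
  linarith

lemma aux_key (k : ℕ) (hk : 1 ≤ k) (p : ℝ → ℝ)
    (hp : ∀ t : ℝ, p t = ∫ x in Set.Ioi t,
      x ^ (k - 1) * Real.exp (-x) / (Nat.factorial (k - 1)))
    {u : ℝ} (hu : 0 < u) :
    p u / (1 - p u) ^ 2 ≤
      (2 ^ k * (k.factorial : ℝ) ^ 2 * rexp 2) * (u ^ (-(2*(k:ℝ))) + rexp (-2⁻¹ * u)) := by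
  set A : ℝ := 2 ^ k * (k.factorial : ℝ) ^ 2 * rexp 2 with hA
  have hA0 : 0 < A := by positivity
  have hrpow : u ^ (-(2*(k:ℝ))) = ((u ^ (2*k) : ℝ))⁻¹ := by
    rw [← Real.rpow_natCast u (2*k), ← Real.rpow_neg hu.le]
    norm_num
  have hexp2 : rexp (-1) * rexp (-1) * rexp 2 = 1 := by
    rw [← Real.exp_add, ← Real.exp_add]; norm_num
  rcases le_total u 1 with hu1 | hu1
  · -- small u
    have hL : rexp (-1) * u ^ k / (k.factorial : ℝ) ≤ 1 - p u := by
      refine le_trans ?_ (aux_lower k hk p hp hu.le)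
      gcongr
    have hL0 : 0 < rexp (-1) * u ^ k / (k.factorial : ℝ) := by positivity
    have hple : p u ≤ 2 ^ k := by
      have h4 : rexp (-2⁻¹ * u) ≤ 1 := Real.exp_le_one_iff.2 (by nlinarith)
      have h5 := aux_p_le k hk p hp hu.le
      nlinarith [pow_pos (zero_lt_two (α := ℝ)) k]
    have hdiv : p u / (1 - p u) ^ 2
        ≤ (2:ℝ) ^ k / (rexp (-1) * u ^ k / (k.factorial : ℝ)) ^ 2 := by
      refine div_le_div₀ (by positivity) hple (by positivity) ?_
      exact pow_le_pow_left₀ hL0.le hL 2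
    refine le_trans hdiv ?_
    have heq : (2:ℝ) ^ k / (rexp (-1) * u ^ k / (k.factorial : ℝ)) ^ 2
        = A * u ^ (-(2*(k:ℝ))) := by
      rw [hrpow, hA]
      have h1 : u ^ (2*k) = (u ^ k) ^ 2 := by rw [← pow_mul, mul_comm]
      have h2 : (0:ℝ) < u ^ k := by positivity
      have h3 : (0:ℝ) < (k.factorial : ℝ) := by positivity
      field_simp [h1]
      linear_combination (-(u^k)^2) * hexp2
    rw [heq]
    nlinarith [Real.exp_pos (-2⁻¹ * u), mul_pos hA0 (Real.exp_pos (-2⁻¹ * u))]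
  · -- large u
    have hL : rexp (-1) / (k.factorial : ℝ) ≤ 1 - p u := aux_lower_one k hk p hp hu1
    have hL0 : 0 < rexp (-1) / (k.factorial : ℝ) := by positivity
    have hdiv : p u / (1 - p u) ^ 2
        ≤ (2 ^ k * rexp (-2⁻¹ * u)) / (rexp (-1) / (k.factorial : ℝ)) ^ 2 := by
      refine div_le_div₀ (by positivity) (aux_p_le k hk p hp (by linarith)) (by positivity) ?_
      exact pow_le_pow_left₀ hL0.le hL 2
    refine le_trans hdiv ?_
    have heq : (2 ^ k * rexp (-2⁻¹ * u)) / (rexp (-1) / (k.factorial : ℝ)) ^ 2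
        = A * rexp (-2⁻¹ * u) := by
      rw [hA]
      have h3 : (0:ℝ) < (k.factorial : ℝ) := by positivity
      field_simp
      linear_combination (-1:ℝ) * hexp2
    rw [heq]
    have : 0 < u ^ (-(2*(k:ℝ))) := Real.rpow_pos_of_pos hu _
    nlinarith

lemma aux_delta_pow {σ : ℝ} (hσ : 0 < σ) (k : ℕ) (hk : 1 ≤ k) {n : ℕ} (hn : 1 ≤ n) :
    (n:ℝ) * (σ ^ ((1:ℝ)/k) * (n : ℝ) ^ (-(1 / (2 * (k:ℝ))))) ^ (2*k) = σ ^ 2 := by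
  have hk0 : (k:ℝ) ≠ 0 := by
    have : (0:ℝ) < k := by exact_mod_cast hk
    exact this.ne'
  have hn0 : (0:ℝ) < n := by exact_mod_cast hn
  have h1 : (σ ^ ((1:ℝ)/k)) ^ (2*k) = σ ^ 2 := by
    rw [← Real.rpow_natCast (σ ^ ((1:ℝ)/k)) (2*k), ← Real.rpow_mul hσ.le,
      show (1:ℝ)/k * ((2*k : ℕ) : ℝ) = 2 by push_cast; field_simp,
      show (2:ℝ) = ((2:ℕ):ℝ) by norm_num, Real.rpow_natCast]
  have h2 : ((n:ℝ) ^ (-(1 / (2 * (k:ℝ))))) ^ (2*k) = ((n:ℝ))⁻¹ := by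
    rw [← Real.rpow_natCast ((n:ℝ) ^ (-(1 / (2 * (k:ℝ))))) (2*k), ← Real.rpow_mul hn0.le,
      show -(1 / (2 * (k:ℝ))) * ((2*k : ℕ) : ℝ) = -1 by push_cast; field_simp,
      Real.rpow_neg_one]
  rw [mul_pow, h1, h2]
  field_simp

/-- If `n E[μ_n(t)] ≤ C p(t)/(1-p(t))²` with `p` the Gamma(k,1) tail and
`δ_n = σ^{1/k} n^{-1/(2k)}`, then `lim_{t→∞} limsup_n E[∫_t^∞ μ_n(δ_n s) ds] = 0`.
Here `f n t` stands for `E[μ_n(t)] ∈ [0,1]`. -/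
theorem limsup_integral_tail_zero
    (k : ℕ) (hk : 1 ≤ k) (C σ : ℝ) (hC : 0 < C) (hσ : 0 < σ)
    (p : ℝ → ℝ)
    (hp : ∀ t : ℝ, p t = ∫ x in Set.Ioi t,
      x ^ (k - 1) * Real.exp (-x) / (Nat.factorial (k - 1)))
    (f : ℕ → ℝ → ℝ)
    (hf01 : ∀ n t, 0 ≤ f n t ∧ f n t ≤ 1)
    (δ : ℕ → ℝ)
    (hδ : ∀ n : ℕ, δ n = σ ^ ((1:ℝ)/k) * (n : ℝ) ^ (-(1 / (2 * (k:ℝ)))))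
    (hbound : ∀ n : ℕ, 1 ≤ n → ∀ t : ℝ, 0 < t →
      (n : ℝ) * f n t ≤ C * p t / (1 - p t) ^ 2) :
    Tendsto
      (fun t : ℝ =>
        Filter.limsup (fun n : ℕ => ∫ s in Set.Ioi t, f n (δ n * s)) atTop)
      atTop (nhds 0) := by
  have hk0 : (0:ℝ) < k := by exact_mod_cast hk
  have hk1 : (1:ℝ) ≤ k := by exact_mod_cast hk
  set A : ℝ := 2 ^ k * (k.factorial : ℝ) ^ 2 * rexp 2 with hA
  have hA0 : 0 < A := by positivity
  have h2k1 : (0:ℝ) < 2 * (k:ℝ) - 1 := by linarith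
  set D : ℝ := C * A / (σ ^ 2 * (2 * (k:ℝ) - 1)) with hD
  have hD0 : 0 ≤ D := by positivity
  have hδpos : ∀ n : ℕ, 1 ≤ n → 0 < δ n := by
    intro n hn
    have hn0 : (0:ℝ) < n := by exact_mod_cast hn
    rw [hδ n]
    positivity
  -- ε and its convergence
  set ε : ℕ → ℝ := fun n => 2 * C * A / ((n:ℝ) * δ n) with hε
  have hndelta : Tendsto (fun n : ℕ => (n:ℝ) * δ n) atTop atTop := by
    have hpos : (0:ℝ) < 1 - 1/(2*(k:ℝ)) := by
      have : 1/(2*(k:ℝ)) ≤ 1/2 := by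
        apply div_le_div_of_nonneg_left (by norm_num) (by norm_num) (by linarith)
      linarith
    have h2 : Tendsto (fun n : ℕ => σ ^ ((1:ℝ)/k) * (n:ℝ) ^ ((1:ℝ) - 1/(2*(k:ℝ))))
        atTop atTop := by
      refine Tendsto.const_mul_atTop (Real.rpow_pos_of_pos hσ _) ?_
      exact (tendsto_rpow_atTop hpos).comp tendsto_natCast_atTop_atTop
    refine h2.congr' ?_
    filter_upwards [eventually_ge_atTop 1] with n hn
    have hn0 : (0:ℝ) < n := by exact_mod_cast hn
    rw [hδ n, show (1:ℝ) - 1/(2*(k:ℝ)) = 1 + (-(1/(2*(k:ℝ)))) by ring,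
      Real.rpow_add hn0, Real.rpow_one]
    ring
  have hεtend : Tendsto ε atTop (nhds 0) := by
    have := (hndelta.inv_tendsto_atTop).const_mul (2*C*A)
    rw [mul_zero] at this
    refine this.congr (fun n => ?_)
    simp [hε, div_eq_mul_inv]
  -- nonnegativity of the integrals
  have hnn : ∀ (n : ℕ) (t : ℝ), 0 ≤ ∫ s in Set.Ioi t, f n (δ n * s) := fun n t =>
    setIntegral_nonneg measurableSet_Ioi (fun x _ => (hf01 n _).1)
  -- main integral bound
  have hmain : ∀ t : ℝ, 1 ≤ t → ∀ n : ℕ, 1 ≤ n →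
      (∫ s in Set.Ioi t, f n (δ n * s)) ≤ D * t ^ (-(2*(k:ℝ)-1)) + ε n := by
    intro t ht n hn
    have ht0 : (0:ℝ) < t := by linarith
    have hn0 : (0:ℝ) < n := by exact_mod_cast hn
    set d : ℝ := δ n with hd
    have hd0 : 0 < d := hδpos n hn
    have hd2 : 0 < d/2 := by linarith
    have hlt : -(2*(k:ℝ)) < -1 := by linarith
    set c₃ : ℝ := C * A / n with hc₃
    have hc₃0 : 0 < c₃ := by positivity
    set g : ℝ → ℝ := fun s =>
      c₃ * d ^ (-(2*(k:ℝ))) * s ^ (-(2*(k:ℝ))) + c₃ * rexp (-(d/2) * s) with hg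
    have hint1 : IntegrableOn (fun s : ℝ => c₃ * d ^ (-(2*(k:ℝ))) * s ^ (-(2*(k:ℝ)))) (Ioi t) :=
      (integrableOn_Ioi_rpow_of_lt hlt ht0).const_mul _
    have hint2 : IntegrableOn (fun s : ℝ => c₃ * rexp (-(d/2) * s)) (Ioi t) :=
      (exp_neg_integrableOn_Ioi t hd2).const_mul _
    have hint : IntegrableOn g (Ioi t) := hint1.add hint2
    have hptwise : ∀ s ∈ Ioi t, f n (d * s) ≤ g s := by
      intro s hs
      have hs0 : 0 < s := lt_trans ht0 hs
      have hds : 0 < d * s := mul_pos hd0 hs0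
      have hb := hbound n hn (d*s) hds
      have hkey := aux_key k hk p hp hds
      have hstep : (n:ℝ) * f n (d*s) ≤ C * (A * ((d*s) ^ (-(2*(k:ℝ))) + rexp (-2⁻¹ * (d*s)))) := by
        calc (n:ℝ) * f n (d*s) ≤ C * p (d*s) / (1 - p (d*s)) ^ 2 := hb
          _ = C * (p (d*s) / (1 - p (d*s)) ^ 2) := by ring
          _ ≤ C * (A * ((d*s) ^ (-(2*(k:ℝ))) + rexp (-2⁻¹ * (d*s)))) :=
              mul_le_mul_of_nonneg_left hkey hC.le
      have hfle : f n (d*s) ≤ C * (A * ((d*s) ^ (-(2*(k:ℝ))) + rexp (-2⁻¹ * (d*s)))) / n := by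
        rw [le_div_iff₀ hn0]
        linarith [hstep]
      refine le_trans hfle (le_of_eq ?_)
      rw [Real.mul_rpow hd0.le hs0.le, show -2⁻¹ * (d*s) = -(d/2) * s by ring]
      rw [hg, hc₃]
      ring
    have hmono : (∫ s in Set.Ioi t, f n (d * s)) ≤ ∫ s in Set.Ioi t, g s := by
      refine integral_mono_of_nonneg ?_ hint ?_
      · filter_upwards with s using (hf01 n _).1
      · filter_upwards [self_mem_ae_restrict measurableSet_Ioi] with s hs using hptwise s hs
    refine le_trans hmono ?_
    have hval : (∫ s in Set.Ioi t, g s)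
        = c₃ * d ^ (-(2*(k:ℝ))) * (-t ^ (-(2*(k:ℝ)) + 1) / (-(2*(k:ℝ)) + 1))
          + c₃ * ((d/2)⁻¹ * rexp (-(d/2) * t)) := by
      rw [hg, integral_add hint1 hint2, integral_const_mul, integral_const_mul,
        integral_Ioi_rpow_of_lt hlt ht0, aux_exp_int t hd2]
    rw [hval]
    have hdinv : d ^ (-(2*(k:ℝ))) = (n:ℝ) / σ ^ 2 := by
      have hpow : (n:ℝ) * d ^ (2*k) = σ ^ 2 := by
        rw [hd, hδ n]; exact aux_delta_pow hσ k hk hn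
      have hdk : d ^ ((2*k : ℕ)) = σ ^ 2 / n := by
        field_simp at hpow ⊢
        linarith [hpow]
      rw [show -(2*(k:ℝ)) = -(((2*k : ℕ)):ℝ) by push_cast; ring,
        Real.rpow_neg hd0.le, Real.rpow_natCast, hdk]
      rw [inv_div]
    have hterm1 : c₃ * d ^ (-(2*(k:ℝ))) * (-t ^ (-(2*(k:ℝ)) + 1) / (-(2*(k:ℝ)) + 1))
        = D * t ^ (-(2*(k:ℝ)-1)) := by
      rw [hdinv, hc₃, hD, show -(2*(k:ℝ)) + 1 = -(2*(k:ℝ)-1) by ring, neg_div_neg_eq]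
      have h4 : C*A/(n:ℝ) * ((n:ℝ)/σ^2) = C*A/σ^2 := by
        field_simp
      rw [h4, div_mul_div_comm, div_mul_eq_mul_div]
    have hterm2 : c₃ * ((d/2)⁻¹ * rexp (-(d/2) * t)) ≤ ε n := by
      have hexp1 : rexp (-(d/2) * t) ≤ 1 := Real.exp_le_one_iff.2 (by nlinarith)
      have : c₃ * ((d/2)⁻¹ * rexp (-(d/2) * t)) ≤ c₃ * (d/2)⁻¹ := by
        nlinarith [inv_pos.2 hd2, mul_pos hc₃0 (inv_pos.2 hd2)]
      refine le_trans this (le_of_eq ?_)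
      rw [hε, hc₃]
      show _ = 2 * C * A / ((n:ℝ) * d)
      field_simp
    linarith [hterm2]
  -- limsup bounds for t ≥ 1
  have hbounds : ∀ t : ℝ, 1 ≤ t →
      0 ≤ limsup (fun n : ℕ => ∫ s in Set.Ioi t, f n (δ n * s)) atTop ∧
      limsup (fun n : ℕ => ∫ s in Set.Ioi t, f n (δ n * s)) atTop
        ≤ D * t ^ (-(2*(k:ℝ)-1)) := by
    intro t ht
    set a : ℕ → ℝ := fun n => ∫ s in Set.Ioi t, f n (δ n * s) with ha
    set b : ℕ → ℝ := fun n => D * t ^ (-(2*(k:ℝ)-1)) + ε n with hb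
    have hab : a ≤ᶠ[atTop] b := by
      filter_upwards [eventually_ge_atTop 1] with n hn using hmain t ht n hn
    have hbtend : Tendsto b atTop (nhds (D * t ^ (-(2*(k:ℝ)-1)))) := by
      have h0 : Tendsto (fun _ : ℕ => D * t ^ (-(2*(k:ℝ)-1))) atTop
          (nhds (D * t ^ (-(2*(k:ℝ)-1)))) := tendsto_const_nhds
      have h1 := h0.add hεtend
      rw [add_zero] at h1
      exact h1
    have hco : IsCoboundedUnder (· ≤ ·) atTop a :=
      isCoboundedUnder_le_of_le atTop (fun n => hnn n t)
    have hbd : IsBoundedUnder (· ≤ ·) atTop b := hbtend.isBoundedUnder_le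
    constructor
    · exact le_limsup_of_frequently_le (Frequently.of_forall (fun n => hnn n t))
        (hbd.mono_le hab)
    · calc limsup a atTop ≤ limsup b atTop := limsup_le_limsup hab hco hbd
        _ = D * t ^ (-(2*(k:ℝ)-1)) := hbtend.limsup_eq
  have htend : Tendsto (fun t : ℝ => D * t ^ (-(2*(k:ℝ)-1))) atTop (nhds 0) := by
    have := (tendsto_rpow_neg_atTop h2k1).const_mul D
    simpa using this
  refine tendsto_of_tendsto_of_tendsto_of_le_of_le'
    (tendsto_const_nhds (x := (0:ℝ))) htend ?_ ?_
  · filter_upwards [eventually_ge_atTop 1] with t ht using (hbounds t ht).1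
  · filter_upwards [eventually_ge_atTop 1] with t ht using (hbounds t ht).2
end
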